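/- Let n ≥ 4, G = A_n, and H = (S_{{1,…,n−2}} × ⟨(n−1 n)⟩) ∩ A_n. Let G_3 = ⟨(i j k)⟩ for a 3-cycle. Then the number of double cosets |H\G/G_3| equals (n² − 5n + 8)/2. -/

import Mathlib

open Pointwise

set_option linter.unusedSectionVars false
set_option maxHeartbeats 1000000

section AnHelpers
variable {n : ℕ} {i j k : Fin n} (hij : i ≠ j) (hjk : j ≠ k) (hik : i ≠ k)
variable {c : Equiv.Perm (Fin n)} (hc : c = Equiv.swap i j * Equiv.swap j k)
include hij hjk hik hc

lemma An_c_i : c i = j := by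
  subst hc
  rw [Equiv.Perm.mul_apply, Equiv.swap_apply_of_ne_of_ne hij hik, Equiv.swap_apply_left]
lemma An_c_j : c j = k := by
  subst hc
  rw [Equiv.Perm.mul_apply, Equiv.swap_apply_left, Equiv.swap_apply_of_ne_of_ne hik.symm hjk.symm]
lemma An_c_k : c k = i := by
  subst hc
  rw [Equiv.Perm.mul_apply, Equiv.swap_apply_right, Equiv.swap_apply_right]
lemma An_c_fix (x : Fin n) (h1 : x ≠ i) (h2 : x ≠ j) (h3 : x ≠ k) : c x = x := by
  subst hc
  rw [Equiv.Perm.mul_apply, Equiv.swap_apply_of_ne_of_ne h2 h3, Equiv.swap_apply_of_ne_of_ne h1 h2]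
lemma An_c_even : c ∈ alternatingGroup (Fin n) := by
  subst hc
  simp [Equiv.Perm.mem_alternatingGroup, Equiv.Perm.sign_swap, hij, hjk]

lemma An_closure_fix (g : Equiv.Perm (Fin n)) (hg : g ∈ Subgroup.closure {c})
    (x : Fin n) (hx : x ∉ ({i, j, k} : Finset (Fin n))) : g x = x := by
  simp only [Finset.mem_insert, Finset.mem_singleton, not_or] at hx
  induction hg using Subgroup.closure_induction with
  | mem g hg => rw [Set.mem_singleton_iff] at hg; subst hg
                exact An_c_fix hij hjk hik hc x hx.1 hx.2.1 hx.2.2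
  | one => rfl
  | mul a b _ _ ha hb => rw [Equiv.Perm.mul_apply, hb, ha]
  | inv a _ ha => nth_rewrite 1 [← ha]; exact Equiv.symm_apply_apply a x

omit hij hjk hik hc in
lemma An_sdiff_smul (g : Equiv.Perm (Fin n)) (T : Finset (Fin n))
    (hg : ∀ x ∉ T, g x = x) (s : Finset (Fin n)) : (g • s) \ T = s \ T := by
  ext y
  simp only [Finset.mem_sdiff, ← Finset.inv_smul_mem_iff]
  constructor
  · rintro ⟨hy, hyT⟩
    have : g y = y := hg y hyT
    have hgy : g⁻¹ • y = y := by
      show g⁻¹ y = y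
      conv_lhs => rw [← this]
      exact Equiv.symm_apply_apply g y
    rw [hgy] at hy
    exact ⟨hy, hyT⟩
  · rintro ⟨hy, hyT⟩
    have hgy : g⁻¹ • y = y := by
      show g⁻¹ y = y
      conv_lhs => rw [← hg y hyT]
      exact Equiv.symm_apply_apply g y
    rw [hgy]
    exact ⟨hy, hyT⟩

lemma An_cycle_trans {a b : Fin n} (ha : a ∈ ({i, j, k} : Finset (Fin n)))
    (hb : b ∈ ({i, j, k} : Finset (Fin n))) : ∃ m : ℕ, (c ^ m) a = b := by
  have hi := An_c_i hij hjk hik hc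
  have hj := An_c_j hij hjk hik hc
  have hk := An_c_k hij hjk hik hc
  have e0 : ∀ x : Fin n, (c ^ 0) x = x := fun x => rfl
  have e1 : ∀ x : Fin n, (c ^ 1) x = c x := fun x => by rw [pow_one]
  have e2 : ∀ x : Fin n, (c ^ 2) x = c (c x) := fun x => by
    rw [pow_succ, pow_one]; rfl
  simp only [Finset.mem_insert, Finset.mem_singleton] at ha hb
  rcases ha with rfl | rfl | rfl <;> rcases hb with rfl | rfl | rfl
  · exact ⟨0, e0 _⟩
  · exact ⟨1, by rw [e1, hi]⟩
  · exact ⟨2, by rw [e2, hi, hj]⟩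
  · exact ⟨2, by rw [e2, hj, hk]⟩
  · exact ⟨0, e0 _⟩
  · exact ⟨1, by rw [e1, hj]⟩
  · exact ⟨1, by rw [e1, hk]⟩
  · exact ⟨2, by rw [e2, hk, hi]⟩
  · exact ⟨0, e0 _⟩

lemma An_cpow_smul_TF (m : ℕ) : (c ^ m) • ({i, j, k} : Finset (Fin n)) = {i, j, k} := by
  induction m with
  | zero => rw [pow_zero]; exact one_smul _ _
  | succ m ih =>
      rw [pow_succ', mul_smul, ih]
      have hi := An_c_i hij hjk hik hc
      have hj := An_c_j hij hjk hik hc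
      have hk := An_c_k hij hjk hik hc
      show Finset.image (c • ·) {i, j, k} = {i, j, k}
      simp only [Finset.image_insert, Finset.image_singleton]
      show ({c i, c j, c k} : Finset (Fin n)) = {i, j, k}
      rw [hi, hj, hk]
      ext x
      simp only [Finset.mem_insert, Finset.mem_singleton]
      tauto

lemma An_card_TF : ({i, j, k} : Finset (Fin n)).card = 3 := by
  rw [Finset.card_insert_of_notMem (by simp [hij, hik]),
    Finset.card_insert_of_notMem (by simp [hjk]), Finset.card_singleton]

omit hij hjk hik hc in
lemma An_smul_of_fix (g : Equiv.Perm (Fin n)) (u : Finset (Fin n))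
    (hu : ∀ x ∈ u, g x = x) : g • u = u := by
  show Finset.image (g • ·) u = u
  exact (Finset.image_congr (g := id) (fun x hx => hu x hx)).trans Finset.image_id

lemma An_lemK {s t : Finset (Fin n)} (hs : s.card = 2) (ht : t.card = 2)
    (hst : s \ {i, j, k} = t \ {i, j, k}) : ∃ m : ℕ, (c ^ m) • s = t := by
  classical
  set T : Finset (Fin n) := {i, j, k} with hT
  have hdecomp : ∀ w : Finset (Fin n), (w \ T) ∪ (w ∩ T) = w := fun w => Finset.sdiff_union_inter w T
  have hcards : (s ∩ T).card = (t ∩ T).card := by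
    have h1 := Finset.card_sdiff_add_card_inter s T
    have h2 := Finset.card_sdiff_add_card_inter t T
    rw [hs] at h1; rw [ht] at h2; rw [hst] at h1; omega
  have main : ∀ m : ℕ, (c ^ m) • (s ∩ T) = t ∩ T → (c ^ m) • s = t := by
    intro m hm
    have hfix : ∀ x ∈ s \ T, (c ^ m) x = x := by
      intro x hx
      exact An_closure_fix hij hjk hik hc _
        (Subgroup.pow_mem _ (Subgroup.mem_closure_singleton_self c) m) x
        (Finset.mem_sdiff.mp hx).2
    calc (c ^ m) • s = (c ^ m) • ((s \ T) ∪ (s ∩ T)) := by rw [hdecomp]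
      _ = (c ^ m) • (s \ T) ∪ (c ^ m) • (s ∩ T) := Finset.smul_finset_union
      _ = (t \ T) ∪ (t ∩ T) := by rw [An_smul_of_fix _ _ hfix, hst, hm]
      _ = t := hdecomp t
  rcases Nat.lt_or_ge (s ∩ T).card 2 with hlt | hge
  · rcases Nat.lt_or_ge (s ∩ T).card 1 with h0 | h1
    · have hs0 : s ∩ T = ∅ := Finset.card_eq_zero.mp (by omega)
      have ht0 : t ∩ T = ∅ := Finset.card_eq_zero.mp (by omega)
      exact ⟨0, main 0 (by rw [hs0, ht0]; simp)⟩
    · have hs1 : (s ∩ T).card = 1 := by omega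
      obtain ⟨a, ha⟩ := Finset.card_eq_one.mp hs1
      obtain ⟨b, hb⟩ := Finset.card_eq_one.mp (hcards ▸ hs1)
      have haT : a ∈ T := (Finset.mem_inter.mp (ha ▸ Finset.mem_singleton_self a)).2
      have hbT : b ∈ T := (Finset.mem_inter.mp (hb ▸ Finset.mem_singleton_self b)).2
      obtain ⟨m, hm⟩ := An_cycle_trans hij hjk hik hc haT hbT
      refine ⟨m, main m ?_⟩
      rw [ha, hb]
      show Finset.image _ {a} = {b}
      rw [Finset.image_singleton]
      show ({(c^m) a} : Finset (Fin n)) = {b}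
      rw [hm]
  · have hs2 : (s ∩ T).card = 2 := by
      have := Finset.card_le_card (Finset.inter_subset_left (s₂ := T) (s₁ := s))
      omega
    have ht2 : (t ∩ T).card = 2 := hcards ▸ hs2
    have hTcard : T.card = 3 := An_card_TF hij hjk hik hc
    have hsd : (T \ (s ∩ T)).card = 1 := by
      rw [Finset.card_sdiff_of_subset Finset.inter_subset_right, hTcard, hs2]
    have htd : (T \ (t ∩ T)).card = 1 := by
      rw [Finset.card_sdiff_of_subset Finset.inter_subset_right, hTcard, ht2]
    obtain ⟨a, ha⟩ := Finset.card_eq_one.mp hsd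
    obtain ⟨b, hb⟩ := Finset.card_eq_one.mp htd
    have haT : a ∈ T := (Finset.mem_sdiff.mp (ha ▸ Finset.mem_singleton_self a)).1
    have hbT : b ∈ T := (Finset.mem_sdiff.mp (hb ▸ Finset.mem_singleton_self b)).1
    obtain ⟨m, hm⟩ := An_cycle_trans hij hjk hik hc haT hbT
    refine ⟨m, main m ?_⟩
    have hsT : s ∩ T = T \ {a} := by
      rw [← ha, Finset.sdiff_sdiff_eq_self Finset.inter_subset_right]
    have htT : t ∩ T = T \ {b} := by
      rw [← hb, Finset.sdiff_sdiff_eq_self Finset.inter_subset_right]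
    rw [hsT, htT, Finset.smul_finset_sdiff, An_cpow_smul_TF hij hjk hik hc m]
    congr 1
    show Finset.image _ {a} = {b}
    rw [Finset.image_singleton]
    show ({(c^m) a} : Finset (Fin n)) = {b}
    rw [hm]

end AnHelpers

lemma An_pair_smul {n : ℕ} (g : Equiv.Perm (Fin n)) (a b : Fin n) :
    g • ({a, b} : Finset (Fin n)) = {g a, g b} := by
  show Finset.image (g • ·) {a, b} = {g a, g b}
  rw [Finset.image_insert, Finset.image_singleton]
  rfl

lemma An_pair_trans {n : ℕ} (p q : Fin n) (hpq : p ≠ q) (s : Finset (Fin n)) (hs : s.card = 2) :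
    ∃ g : Equiv.Perm (Fin n), g ∈ alternatingGroup (Fin n) ∧
      g • ({p, q} : Finset (Fin n)) = s := by
  obtain ⟨a, b, hab, rfl⟩ := Finset.card_eq_two.mp hs
  set q' : Fin n := Equiv.swap p a q with hq'
  have haq' : a ≠ q' := by
    intro h
    exact hpq (by simpa using (Equiv.injective (Equiv.swap p a)
      (by rw [← hq', ← h, Equiv.swap_apply_left])).symm)
  set g0 : Equiv.Perm (Fin n) := Equiv.swap q' b * Equiv.swap p a with hg0
  have hg0p : g0 p = a := by
    rw [hg0, Equiv.Perm.mul_apply, Equiv.swap_apply_left,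
      Equiv.swap_apply_of_ne_of_ne haq'.symm.symm hab]
  have hg0q : g0 q = b := by
    rw [hg0, Equiv.Perm.mul_apply, ← hq', Equiv.swap_apply_left]
  have himg : g0 • ({p, q} : Finset (Fin n)) = {a, b} := by
    rw [An_pair_smul, hg0p, hg0q]
  by_cases hA : g0 ∈ alternatingGroup (Fin n)
  · exact ⟨g0, hA, himg⟩
  · refine ⟨g0 * Equiv.swap p q, ?_, ?_⟩
    · rw [Equiv.Perm.mem_alternatingGroup, Equiv.Perm.sign_mul,
        Equiv.Perm.sign_swap hpq]
      rw [Equiv.Perm.mem_alternatingGroup] at hA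
      rcases Int.units_eq_one_or (Equiv.Perm.sign g0) with h | h
      · exact absurd h hA
      · rw [h]; rfl
    · rw [mul_smul, An_pair_smul, Equiv.swap_apply_left, Equiv.swap_apply_right]
      rw [Finset.pair_comm, himg]

lemma An_count_Y {n : ℕ} (T : Finset (Fin n)) (hT : T.card = 3) :
    Nat.card {u : Finset (Fin n) // u ⊆ Tᶜ ∧ u.card ≤ 2}
      = 1 + (n - 3) + (n - 3).choose 2 := by
  classical
  rw [Nat.card_eq_fintype_card, Fintype.card_subtype]
  have hfilter : Finset.univ.filter (fun u : Finset (Fin n) => u ⊆ Tᶜ ∧ u.card ≤ 2)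
      = (Finset.range 3).biUnion (fun r => Tᶜ.powersetCard r) := by
    ext u
    simp only [Finset.mem_filter, Finset.mem_univ, true_and, Finset.mem_biUnion,
      Finset.mem_range, Finset.mem_powersetCard]
    constructor
    · rintro ⟨h1, h2⟩; exact ⟨u.card, by omega, h1, rfl⟩
    · rintro ⟨r, hr, h1, h2⟩; exact ⟨h1, by omega⟩
  rw [hfilter, Finset.card_biUnion]
  · have hcompl : Tᶜ.card = n - 3 := by
      rw [Finset.card_compl, hT, Fintype.card_fin]
    simp only [Finset.card_powersetCard, hcompl]
    rw [Finset.sum_range_succ, Finset.sum_range_succ, Finset.sum_range_one,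
      Nat.choose_zero_right, Nat.choose_one_right]
  · intro x _ y _ hxy
    apply Finset.disjoint_left.mpr
    intro u hu hu'
    rw [Finset.mem_powersetCard] at hu hu'
    exact hxy (hu.2 ▸ hu'.2)

lemma An_arith {n : ℕ} (hn : 4 ≤ n) :
    ((1 + (n - 3) + (n - 3).choose 2 : ℕ) : ℚ) = ((n : ℚ) ^ 2 - 5 * n + 8) / 2 := by
  have h3 : (((n - 3 : ℕ)) : ℚ) = (n : ℚ) - 3 := by
    push_cast [Nat.cast_sub (by omega : 3 ≤ n)]; ring
  push_cast [Nat.cast_choose_two, h3]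
  ring


theorem An_double_cosets_count
    (n : ℕ) (hn : 4 ≤ n)
    -- M = S_{{1,…,n−2}} × ⟨(n−1 n)⟩, i.e. the setwise stabilizer of {1,…,n−2}
    (M : Subgroup (Equiv.Perm (Fin n)))
    (hM : M = MulAction.stabilizer (Equiv.Perm (Fin n))
        ({l : Fin n | (l : ℕ) < n - 2} : Set (Fin n)))
    -- H = M ∩ A_n
    (H : Subgroup (alternatingGroup (Fin n)))
    (hH : H = M.subgroupOf (alternatingGroup (Fin n)))
    (i j k : Fin n) (hij : i ≠ j) (hjk : j ≠ k) (hik : i ≠ k)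
    -- the 3-cycle (i j k)
    (c : Equiv.Perm (Fin n)) (hc : c = Equiv.swap i j * Equiv.swap j k)
    -- G₃ = ⟨(i j k)⟩ ≤ A_n
    (G₃ : Subgroup (alternatingGroup (Fin n)))
    (hG₃ : G₃ = (Subgroup.closure {c}).subgroupOf (alternatingGroup (Fin n))) :
    (Nat.card (DoubleCoset.Quotient (H : Set (alternatingGroup (Fin n)))
        (G₃ : Set (alternatingGroup (Fin n)))) : ℚ)
      = ((n : ℚ) ^ 2 - 5 * n + 8) / 2 := by
  classical
  set TF : Finset (Fin n) := {i, j, k} with hTF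
  -- the distinguished pair
  have h2n : n - 2 < n := by omega
  have h1n : n - 1 < n := by omega
  set p : Fin n := ⟨n - 2, h2n⟩ with hp
  set q : Fin n := ⟨n - 1, h1n⟩ with hq
  have hpq : p ≠ q := by
    simp only [hp, hq, Ne, Fin.mk.injEq]
    omega
  set PF : Finset (Fin n) := {p, q} with hPF
  have hPFcard : PF.card = 2 := Finset.card_pair hpq
  -- H membership
  have hmemH : ∀ g : alternatingGroup (Fin n), g ∈ H ↔ (g : Equiv.Perm (Fin n)) • PF = PF := by
    intro g
    rw [hH, Subgroup.mem_subgroupOf, hM, MulAction.mem_stabilizer_iff]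
    have hcoe : (↑PF : Set (Fin n)) = ({l : Fin n | (l : ℕ) < n - 2} : Set (Fin n))ᶜ := by
      ext x
      simp only [hPF, Finset.coe_insert, Finset.coe_singleton, Set.mem_insert_iff,
        Set.mem_singleton_iff, Set.mem_compl_iff, Set.mem_setOf_eq, hp, hq,
        Fin.ext_iff]
      have := x.isLt
      omega
    constructor
    · intro hg
      have : (g : Equiv.Perm (Fin n)) • (↑PF : Set (Fin n)) = ↑PF := by
        rw [hcoe, Set.smul_set_compl, hg]
      rwa [← Finset.coe_smul_finset, Finset.coe_inj] at this
    · intro hg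
      have h1 : (g : Equiv.Perm (Fin n)) • (↑PF : Set (Fin n)) = ↑PF := by
        rw [← Finset.coe_smul_finset, hg]
      rw [hcoe, Set.smul_set_compl] at h1
      exact compl_injective h1
  -- G₃ membership
  have hmemG₃ : ∀ g : alternatingGroup (Fin n), g ∈ G₃ ↔ (g : Equiv.Perm (Fin n)) ∈ Subgroup.closure {c} := by
    intro g
    rw [hG₃, Subgroup.mem_subgroupOf]
  -- the invariant map
  set f : alternatingGroup (Fin n) → {u : Finset (Fin n) // u ⊆ TFᶜ ∧ u.card ≤ 2} := fun g =>
    ⟨((g : Equiv.Perm (Fin n))⁻¹ • PF) \ TF,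
      fun x hx => Finset.mem_compl.mpr (Finset.mem_sdiff.mp hx).2,
      le_trans (Finset.card_le_card (Finset.sdiff_subset))
        (le_of_eq ((Finset.card_smul_finset _ _).trans hPFcard))⟩ with hf
  have hfcard : ∀ g : alternatingGroup (Fin n), ((g : Equiv.Perm (Fin n))⁻¹ • PF).card = 2 :=
    fun g => (Finset.card_smul_finset _ _).trans hPFcard
  -- well-definedness
  have hwd : ∀ a b : alternatingGroup (Fin n), DoubleCoset.setoid (H : Set (alternatingGroup (Fin n))) (G₃ : Set (alternatingGroup (Fin n))) a b → f a = f b := by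
    intro a b hab
    obtain ⟨h, hh, z, hz, rfl⟩ := DoubleCoset.rel_iff.mp hab
    apply Subtype.ext
    symm
    show (((h * a * z : alternatingGroup (Fin n)) : Equiv.Perm (Fin n))⁻¹ • PF) \ TF
        = ((a : Equiv.Perm (Fin n))⁻¹ • PF) \ TF
    have hcoe : ((h * a * z : alternatingGroup (Fin n)) : Equiv.Perm (Fin n))⁻¹
        = (z : Equiv.Perm (Fin n))⁻¹ * ((a : Equiv.Perm (Fin n))⁻¹ * (h : Equiv.Perm (Fin n))⁻¹) := by
      push_cast
      group
    rw [hcoe, mul_smul, mul_smul]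
    have hhfix : (h : Equiv.Perm (Fin n))⁻¹ • PF = PF := by
      rw [inv_smul_eq_iff, (hmemH h).mp hh]
    rw [hhfix]
    apply An_sdiff_smul
    intro x hx
    exact An_closure_fix hij hjk hik hc _
      (Subgroup.inv_mem _ ((hmemG₃ z).mp hz)) x hx
  -- the lifted map
  set F : DoubleCoset.Quotient (H : Set (alternatingGroup (Fin n))) (G₃ : Set (alternatingGroup (Fin n))) → {u : Finset (Fin n) // u ⊆ TFᶜ ∧ u.card ≤ 2} :=
    Quotient.lift f hwd with hF
  have hinj : Function.Injective F := by
    intro x y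
    induction x using Quotient.inductionOn' with | h x =>
    induction y using Quotient.inductionOn' with | h y =>
    intro hxy
    have heq : ((x : Equiv.Perm (Fin n))⁻¹ • PF) \ TF
        = ((y : Equiv.Perm (Fin n))⁻¹ • PF) \ TF := congrArg Subtype.val hxy
    obtain ⟨m, hm⟩ := An_lemK hij hjk hik hc (hfcard x) (hfcard y) heq
    have hzA : c ^ m ∈ alternatingGroup (Fin n) := Subgroup.pow_mem _ (An_c_even hij hjk hik hc) m
    set zA : alternatingGroup (Fin n) := ⟨c ^ m, hzA⟩ with hzAdef
    have hzG₃ : zA ∈ G₃ := (hmemG₃ zA).mpr (Subgroup.pow_mem _ (Subgroup.mem_closure_singleton_self c) m)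
    set h : alternatingGroup (Fin n) := y * zA * x⁻¹ with hhdef
    have hhH : h ∈ H := by
      rw [hmemH]
      have : (h : Equiv.Perm (Fin n)) • PF
          = (y : Equiv.Perm (Fin n)) • ((c ^ m) • ((x : Equiv.Perm (Fin n))⁻¹ • PF)) := by
        rw [hhdef]
        push_cast
        rw [mul_smul, mul_smul]
      rw [this, hm, smul_inv_smul]
    apply Quotient.sound'
    show DoubleCoset.setoid (H : Set (alternatingGroup (Fin n))) (G₃ : Set (alternatingGroup (Fin n))) x y
    apply DoubleCoset.rel_iff.mpr
    exact ⟨h, hhH, zA⁻¹, Subgroup.inv_mem _ hzG₃, by rw [hhdef]; group⟩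
  have hsurj : Function.Surjective F := by
    rintro ⟨u, hu1, hu2⟩
    -- build a pair s with s \ TF = u
    have hbuild : ∃ s : Finset (Fin n), s.card = 2 ∧ s \ TF = u := by
      have hiTF : i ∈ TF := by simp [hTF]
      have hjTF : j ∈ TF := by simp [hTF]
      have hdisj : ∀ x ∈ u, x ∉ TF := fun x hx => Finset.mem_compl.mp (hu1 hx)
      rcases Nat.lt_or_ge u.card 1 with h0 | h1
      · have hcard : u = ∅ := Finset.card_eq_zero.mp (by omega)
        refine ⟨{i, j}, Finset.card_pair hij, ?_⟩
        rw [hcard, Finset.sdiff_eq_empty_iff_subset.mpr]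
        intro x hx
        rcases Finset.mem_insert.mp hx with rfl | hx
        · exact hiTF
        · rw [Finset.mem_singleton.mp hx]; exact hjTF
      · rcases Nat.lt_or_ge u.card 2 with h1' | h2
        · have hcard : u.card = 1 := by omega
          refine ⟨insert i u, ?_, ?_⟩
          · rw [Finset.card_insert_of_notMem (fun hi => hdisj i hi hiTF), hcard]
          · rw [Finset.insert_sdiff_of_mem _ hiTF, Finset.sdiff_eq_self_iff_disjoint.mpr]
            exact Finset.disjoint_left.mpr hdisj
        · have hcard : u.card = 2 := by omega
          refine ⟨u, hcard, ?_⟩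
          rw [Finset.sdiff_eq_self_iff_disjoint.mpr]
          exact Finset.disjoint_left.mpr hdisj
    obtain ⟨s, hscard, hsu⟩ := hbuild
    obtain ⟨g, hgA, hgs⟩ := An_pair_trans p q hpq s hscard
    refine ⟨Quotient.mk'' ((⟨g, hgA⟩ : alternatingGroup (Fin n))⁻¹), ?_⟩
    apply Subtype.ext
    show (((((⟨g, hgA⟩ : alternatingGroup (Fin n)))⁻¹ : alternatingGroup (Fin n)) : Equiv.Perm (Fin n))⁻¹ • PF) \ TF = u
    have : ((((⟨g, hgA⟩ : alternatingGroup (Fin n)))⁻¹ : alternatingGroup (Fin n)) : Equiv.Perm (Fin n))⁻¹ = g := by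
      push_cast
      group
    rw [this, hgs, hsu]
  -- conclude
  have hcards : Nat.card (DoubleCoset.Quotient (H : Set (alternatingGroup (Fin n))) (G₃ : Set (alternatingGroup (Fin n))))
      = 1 + (n - 3) + (n - 3).choose 2 := by
    rw [Nat.card_congr (Equiv.ofBijective F ⟨hinj, hsurj⟩)]
    exact An_count_Y TF (An_card_TF hij hjk hik hc)
  rw [hcards]
  exact An_arith hn
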